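/- Fix integers k ≥ 1 and m ≥ k, and let 𝒳 = {−2k·2^i : 0 ≤ i ≤ m−1} ∪ {2k·2^i : 0 ≤ i ≤ m−1} ⊆ ℝ. Consider the two-player game in which each player chooses a subset of 𝒳 of size k, the receiver is x̂ = (1/(2k))·(sum of all 2k chosen elements), and the losses are ℓ_1 = (x̂ + 1/4)² and ℓ_2 = (x̂ − 1/4)². Then for every subset S ⊆ {0,...,m−1} with |S| = k, the profile (x_1, x_2) with x_1 = {−2k·2^i : i ∈ S} and x_2 = {2k·2^i : i ∈ S} is a pure Nash equilibrium. Consequently, the game has at least binomial(m, k) distinct pure Nash equilibria. -/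

import Mathlib

noncomputable section

/-- The finite action pool `𝒳 = {−2k·2^i : 0 ≤ i ≤ m−1} ∪ {2k·2^i : 0 ≤ i ≤ m−1}`. -/
def poolX (k m : ℕ) : Finset ℝ :=
  (Finset.range m).image (fun i => -((2 * k : ℝ) * 2 ^ i)) ∪
    (Finset.range m).image (fun i => (2 * k : ℝ) * 2 ^ i)

/-- The receiver `x̂ = (1/(2k)) (∑_{v ∈ x₁} v + ∑_{v ∈ x₂} v)`. -/
def receiverS (k : ℕ) (A B : Finset ℝ) : ℝ :=
  ((∑ v ∈ A, v) + ∑ v ∈ B, v) / (2 * k)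

/-- Player 1's loss `(x̂ − t₁)²` with `t₁ = −1/4`. -/
def loss1S (k : ℕ) (A B : Finset ℝ) : ℝ := (receiverS k A B + 1 / 4) ^ 2

/-- Player 2's loss `(x̂ − t₂)²` with `t₂ = 1/4`. -/
def loss2S (k : ℕ) (A B : Finset ℝ) : ℝ := (receiverS k A B - 1 / 4) ^ 2

/-- `(x₁, x₂)` is a pure Nash equilibrium of the two-player subset-selection
game: both actions are size-`k` subsets of `𝒳`, and no player can strictly
decrease its own loss by switching to another size-`k` subset of `𝒳`. -/
def IsPureNES (k m : ℕ) (A B : Finset ℝ) : Prop :=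
  A ⊆ poolX k m ∧ B ⊆ poolX k m ∧ A.card = k ∧ B.card = k ∧
    (∀ A' ⊆ poolX k m, A'.card = k → loss1S k A B ≤ loss1S k A' B) ∧
    (∀ B' ⊆ poolX k m, B'.card = k → loss2S k A B ≤ loss2S k A B')

lemma sum_pool_int {k m : ℕ} {A : Finset ℝ} (hA : A ⊆ poolX k m) :
    ∃ n : ℤ, (∑ v ∈ A, v) = 2 * k * n := by
  have hmem : ∀ x ∈ A, x ∈ AddSubgroup.zmultiples ((2 * k : ℝ)) := by
    intro x hx
    have := hA hx
    simp only [poolX, Finset.mem_union, Finset.mem_image, Finset.mem_range] at this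
    rcases this with ⟨i, _, rfl⟩ | ⟨i, _, rfl⟩
    · refine ⟨-(2 ^ i : ℤ), ?_⟩
      simp only [zsmul_eq_mul]
      push_cast
      ring
    · refine ⟨(2 ^ i : ℤ), ?_⟩
      simp only [zsmul_eq_mul]
      push_cast
      ring
  have hsum : (∑ v ∈ A, v) ∈ AddSubgroup.zmultiples ((2 * k : ℝ)) :=
    AddSubgroup.sum_mem _ hmem
  rcases hsum with ⟨n, hn⟩
  exact ⟨n, by rw [← hn]; push_cast [zsmul_eq_mul]; ring⟩

lemma int_sq_bound (n : ℤ) : (1 / 16 : ℝ) ≤ ((n : ℝ) + 1 / 4) ^ 2 := by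
  rcases le_or_gt 0 n with h | h
  · have : (0 : ℝ) ≤ n := by exact_mod_cast h
    nlinarith
  · have hn : n ≤ -1 := by omega
    have : (n : ℝ) ≤ -1 := by exact_mod_cast hn
    nlinarith

lemma int_sq_bound' (n : ℤ) : (1 / 16 : ℝ) ≤ ((n : ℝ) - 1 / 4) ^ 2 := by
  rcases le_or_gt n 0 with h | h
  · have : (n : ℝ) ≤ 0 := by exact_mod_cast h
    nlinarith
  · have : (1 : ℝ) ≤ n := by exact_mod_cast h
    nlinarith

/-- For `k ≥ 1` and `m ≥ k`: every size-`k` subset `S ⊆ {0, …, m−1}` yields a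
pure Nash equilibrium `x₁ = {−2k·2^i : i ∈ S}`, `x₂ = {2k·2^i : i ∈ S}`;
consequently the game has at least `binomial(m, k)` distinct pure Nash
equilibria. -/
theorem subset_game_many_pNE (k m : ℕ) (hk : 1 ≤ k) (hm : k ≤ m) :
    (∀ S ⊆ Finset.range m, S.card = k →
        IsPureNES k m (S.image (fun i => -((2 * k : ℝ) * 2 ^ i)))
          (S.image (fun i => (2 * k : ℝ) * 2 ^ i))) ∧
      ∃ T : Finset (Finset ℝ × Finset ℝ),
        Nat.choose m k ≤ T.card ∧ ∀ p ∈ T, IsPureNES k m p.1 p.2 := by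
  have hk0 : (0 : ℝ) < 2 * k := by positivity
  have hkne : (2 * (k : ℝ)) ≠ 0 := by positivity
  have hginj : Function.Injective (fun i : ℕ => (2 * k : ℝ) * 2 ^ i) := by
    intro i j hij
    have h2 : ((2 : ℝ) ^ i) = 2 ^ j := mul_left_cancel₀ hkne hij
    exact pow_right_injective₀ (by norm_num) (by norm_num) h2
  have hfinj : Function.Injective (fun i : ℕ => -((2 * k : ℝ) * 2 ^ i)) := by
    intro i j hij
    exact hginj (by simpa using neg_injective hij)
  have main : ∀ S ⊆ Finset.range m, S.card = k →
      IsPureNES k m (S.image (fun i => -((2 * k : ℝ) * 2 ^ i)))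
        (S.image (fun i => (2 * k : ℝ) * 2 ^ i)) := by
    intro S hS hcard
    set A := S.image (fun i => -((2 * k : ℝ) * 2 ^ i)) with hA
    set B := S.image (fun i => (2 * k : ℝ) * 2 ^ i) with hB
    have hApool : A ⊆ poolX k m :=
      (Finset.image_subset_image hS).trans Finset.subset_union_left
    have hBpool : B ⊆ poolX k m :=
      (Finset.image_subset_image hS).trans Finset.subset_union_right
    have hsumA : (∑ v ∈ A, v) = -∑ i ∈ S, (2 * k : ℝ) * 2 ^ i := by
      rw [hA, Finset.sum_image (fun a _ b _ h => hfinj h)]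
      simp
    have hsumB : (∑ v ∈ B, v) = ∑ i ∈ S, (2 * k : ℝ) * 2 ^ i := by
      rw [hB, Finset.sum_image (fun a _ b _ h => hginj h)]
    have hrec : receiverS k A B = 0 := by
      rw [receiverS, hsumA, hsumB]
      simp
    refine ⟨hApool, hBpool, ?_, ?_, ?_, ?_⟩
    · rw [hA, Finset.card_image_of_injective _ hfinj, hcard]
    · rw [hB, Finset.card_image_of_injective _ hginj, hcard]
    · intro A' hA' _
      rcases sum_pool_int hA' with ⟨a, ha⟩
      rcases sum_pool_int hBpool with ⟨b, hb⟩
      have : receiverS k A' B = ((a + b : ℤ) : ℝ) := by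
        rw [receiverS, ha, hb]
        push_cast
        field_simp
      rw [loss1S, loss1S, this, hrec]
      calc ((0 : ℝ) + 1 / 4) ^ 2 = 1 / 16 := by norm_num
        _ ≤ _ := int_sq_bound _
    · intro B' hB' _
      rcases sum_pool_int hApool with ⟨a, ha⟩
      rcases sum_pool_int hB' with ⟨b, hb⟩
      have : receiverS k A B' = ((a + b : ℤ) : ℝ) := by
        rw [receiverS, ha, hb]
        push_cast
        field_simp
      rw [loss2S, loss2S, this, hrec]
      calc ((0 : ℝ) - 1 / 4) ^ 2 = 1 / 16 := by norm_num
        _ ≤ _ := int_sq_bound' _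
  refine ⟨main, ?_⟩
  refine ⟨((Finset.range m).powersetCard k).image
    (fun S => (S.image (fun i => -((2 * k : ℝ) * 2 ^ i)),
               S.image (fun i => (2 * k : ℝ) * 2 ^ i))), ?_, ?_⟩
  · rw [Finset.card_image_of_injective _ ?_, Finset.card_powersetCard,
      Finset.card_range]
    intro S1 S2 h
    exact Finset.image_injective hginj (congrArg Prod.snd h)
  · intro p hp
    simp only [Finset.mem_image, Finset.mem_powersetCard] at hp
    rcases hp with ⟨S, ⟨hS, hScard⟩, rfl⟩
    exact main S hS hScard

end
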